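/- Let L ≥ 4 be an even integer and define, for real δ ∈ [0,1], f̀_L(δ) = (1/L)·log(Σ_{j=L/2}^{L} C(L,j)) − h(δ) − (1/L)·log C(L,L/2) + (δ/2)·log(L/2) + (1/L)·h(δL/4), where C(a,b) is the binomial coefficient. Then f̀_L(0) > 0 and f̀_L(1/L) < 0; consequently there exists δ̀ ∈ (0, 1/L) such that f̀_L(δ̀) = 0 and f̀_L(δ) > 0 for all δ with 0 ≤ δ < δ̀. -/

import Mathlib

open Finset Filter

/-- Weight (number of ones) of a binary word. -/
def wt {n : ℕ} (x : Fin n → Bool) : ℕ := (Finset.univ.filter fun i => x i = true).card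

/-- The index (in a word of length `m * L`) of position `j` of subblock `i`. -/
def subIdx (m L : ℕ) (i : Fin m) (j : Fin L) : Fin (m * L) :=
  ⟨i.val * L + j.val, by
    have hj : j.val < L := j.isLt
    have hi : i.val + 1 ≤ m := i.isLt
    calc i.val * L + j.val < i.val * L + L := Nat.add_lt_add_left hj _
      _ = (i.val + 1) * L := by ring
      _ ≤ m * L := Nat.mul_le_mul hi (Nat.le_refl L)⟩

/-- The `i`-th subblock (of length `L`) of a binary word of length `m * L`. -/
def subblock (m L : ℕ) (x : Fin (m * L) → Bool) (i : Fin m) : Fin L → Bool :=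
  fun j => x (subIdx m L i j)

/-- The CSCC space: binary words of length `m * L` each of whose `m` subblocks of
length `L` has weight exactly `w`. -/
def CSCCspace (m L w : ℕ) : Set (Fin (m * L) → Bool) :=
  {x | ∀ i : Fin m, wt (subblock m L x i) = w}

/-- The SECC space: binary words of length `m * L` each of whose `m` subblocks of
length `L` has weight at least `w`. -/
def SECCspace (m L w : ℕ) : Set (Fin (m * L) → Bool) :=
  {x | ∀ i : Fin m, w ≤ wt (subblock m L x i)}

/-- A code with minimum distance `d` inside the space `Sp`. -/
def isCode {n : ℕ} (Sp : Set (Fin n → Bool)) (d : ℕ) (C : Finset (Fin n → Bool)) : Prop :=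
  (↑C : Set (Fin n → Bool)) ⊆ Sp ∧ ∀ x ∈ C, ∀ y ∈ C, x ≠ y → d ≤ hammingDist x y

/-- The ball of radius `t` around `x`, taken inside the space `Sp`. -/
def ball {n : ℕ} (Sp : Set (Fin n → Bool)) (x : Fin n → Bool) (t : ℕ) :
    Set (Fin n → Bool) :=
  {y | y ∈ Sp ∧ hammingDist x y ≤ t}

/-- `C(m,L,d,w)`: the maximum size of an `(m,L,d,w)`-CSCC. -/
noncomputable def maxCSCC (m L d w : ℕ) : ℕ :=
  sSup {k | ∃ C : Finset (Fin (m * L) → Bool), isCode (CSCCspace m L w) d C ∧ C.card = k}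

/-- `S(m,L,d,w)`: the maximum size of an `(m,L,d,w)`-SECC. -/
noncomputable def maxSECC (m L d w : ℕ) : ℕ :=
  sSup {k | ∃ C : Finset (Fin (m * L) → Bool), isCode (SECCspace m L w) d C ∧ C.card = k}

/-- `A(n,d,w)`: the maximum size of a constant weight code. -/
noncomputable def maxCWC (n d w : ℕ) : ℕ :=
  sSup {k | ∃ C : Finset (Fin n → Bool), isCode {x | wt x = w} d C ∧ C.card = k}

/-- `H(n,d,w)`: the maximum size of a heavy weight code. -/
noncomputable def maxHWC (n d w : ℕ) : ℕ :=
  sSup {k | ∃ C : Finset (Fin n → Bool), isCode {x | w ≤ wt x} d C ∧ C.card = k}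

/-- `A(n,d)`: the maximum size of a binary code of length `n` and distance `d`. -/
noncomputable def maxBinary (n d : ℕ) : ℕ :=
  sSup {k | ∃ C : Finset (Fin n → Bool),
    (∀ x ∈ C, ∀ y ∈ C, x ≠ y → d ≤ hammingDist x y) ∧ C.card = k}

/-- `A_q(n,d)`: the maximum size of a `q`-ary code of length `n` and distance `d`. -/
noncomputable def maxQary (q n d : ℕ) : ℕ :=
  sSup {k | ∃ C : Finset (Fin n → Fin q),
    (∀ x ∈ C, ∀ y ∈ C, x ≠ y → d ≤ hammingDist x y) ∧ C.card = k}

/-- The size of a radius-`r` CSCC ball: the sum over all tuples `(u_1, …, u_m)` with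
`0 ≤ u_i ≤ min{w, L-w}` and `2(u_1 + ⋯ + u_m) ≤ r` of `∏ i, C(w,u_i)·C(L-w,u_i)`. -/
def csccBallSize (m L w r : ℕ) : ℕ :=
  ∑ u ∈ (Finset.univ : Finset (Fin m → Fin (min w (L - w) + 1))).filter
      (fun u => 2 * (∑ i, (u i : ℕ)) ≤ r),
    ∏ i, (w.choose (u i : ℕ)) * ((L - w).choose (u i : ℕ))

/-- The binary entropy function (base-2 logarithms, `h 0 = h 1 = 0`). -/
noncomputable def binent (p : ℝ) : ℝ :=
  -(p * Real.logb 2 p) - (1 - p) * Real.logb 2 (1 - p)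

/-- The asymptotic CSCC rate `γ(L,δ,w/L)`. -/
noncomputable def gammaRate (L : ℕ) (δ : ℝ) (w : ℕ) : ℝ :=
  Filter.limsup (fun m : ℕ =>
    Real.logb 2 (maxCSCC m L ⌊(m : ℝ) * L * δ⌋₊ w) / ((m : ℝ) * L)) Filter.atTop

/-- The asymptotic SECC rate `σ(L,δ,w/L)`. -/
noncomputable def sigmaRate (L : ℕ) (δ : ℝ) (w : ℕ) : ℝ :=
  Filter.limsup (fun m : ℕ =>
    Real.logb 2 (maxSECC m L ⌊(m : ℝ) * L * δ⌋₊ w) / ((m : ℝ) * L)) Filter.atTop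
/-- The function `f̀_L(δ) = (1/L)·log(Σ_{j=L/2}^{L} C(L,j)) − h(δ)
    − (1/L)·log C(L,L/2) + (δ/2)·log(L/2) + (1/L)·h(δL/4)`. -/
noncomputable def fGrave (L : ℕ) (δ : ℝ) : ℝ :=
  (1 / (L : ℝ)) * Real.logb 2 ((∑ j ∈ Finset.Icc (L / 2) L, L.choose j : ℕ))
    - binent δ - (1 / (L : ℝ)) * Real.logb 2 (L.choose (L / 2))
    + (δ / 2) * Real.logb 2 ((L : ℝ) / 2) + (1 / (L : ℝ)) * binent (δ * (L : ℝ) / 4)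

/-- Lower bound for the central binomial coefficient: `16^n ≤ 4n · C(2n,n)²`. -/
lemma cb_sq : ∀ n : ℕ, 1 ≤ n → 16 ^ n ≤ 4 * n * (Nat.centralBinom n) ^ 2 := by
  intro n hn
  induction n with
  | zero => omega
  | succ k ih =>
    rcases Nat.lt_or_ge k 1 with hk | hk
    · interval_cases k
      simp [Nat.centralBinom]
    · have IH := ih hk
      have key := Nat.succ_mul_centralBinom_succ k
      have h2 : (k+1)^2 * 16^(k+1) ≤ (k+1)^2 * (4*(k+1) * (Nat.centralBinom (k+1))^2) := by
        calc (k+1)^2 * 16^(k+1) = 16*(k+1)^2 * 16^k := by ring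
          _ ≤ 16*(k+1)^2 * (4*k*(Nat.centralBinom k)^2) := Nat.mul_le_mul_left _ IH
          _ ≤ 4*(k+1) * (2*(2*k+1) * Nat.centralBinom k)^2 := by nlinarith [sq_nonneg (Nat.centralBinom k)]
          _ = 4*(k+1) * ((k+1) * Nat.centralBinom (k+1))^2 := by rw [key]
          _ = (k+1)^2 * (4*(k+1) * (Nat.centralBinom (k+1))^2) := by ring
      exact Nat.le_of_mul_le_mul_left h2 (by positivity)

lemma continuous_binent : Continuous binent := by
  have h : Continuous fun p : ℝ => p * Real.log p := Real.continuous_mul_log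
  have he : binent = fun p : ℝ =>
      (-(p * Real.log p) - ((1-p) * Real.log (1-p))) / Real.log 2 := by
    funext p
    simp only [binent, Real.logb]
    ring
  rw [he]
  exact ((h.neg.sub (h.comp (continuous_const.sub continuous_id))).div_const _)

lemma binent_zero : binent 0 = 0 := by simp [binent]
/-- For even `L ≥ 4`: `f̀_L(0) > 0`, `f̀_L(1/L) < 0`, and hence `f̀_L` has a root
`δ̀ ∈ (0, 1/L)` with `f̀_L > 0` on `[0, δ̀)`. -/
theorem stmt_19 (L : ℕ) (hL : 4 ≤ L) (hLe : Even L) :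
    0 < fGrave L 0 ∧ fGrave L (1 / (L : ℝ)) < 0 ∧
    ∃ δg : ℝ, δg ∈ Set.Ioo 0 (1 / (L : ℝ)) ∧ fGrave L δg = 0 ∧
      ∀ δ : ℝ, 0 ≤ δ → δ < δg → 0 < fGrave L δ := by
  obtain ⟨r, hr⟩ := hLe
  have hrL : L = 2 * r := by omega
  have hhalf : L / 2 = r := by omega
  have hr2 : 2 ≤ r := by omega
  have hCB : L.choose (L / 2) = Nat.centralBinom r := by
    rw [hhalf, hrL, Nat.centralBinom_eq_two_mul_choose]
  have hCpos : 0 < L.choose (L / 2) := Nat.choose_pos (by omega)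
  have hSge : L.choose (L / 2) + 1 ≤ ∑ j ∈ Finset.Icc (L / 2) L, L.choose j := by
    have hsub : ({L / 2, L} : Finset ℕ) ⊆ Finset.Icc (L / 2) L := by
      intro j hj
      simp only [Finset.mem_insert, Finset.mem_singleton] at hj
      simp only [Finset.mem_Icc]
      omega
    have hpair : ∑ j ∈ ({L / 2, L} : Finset ℕ), L.choose j = L.choose (L / 2) + 1 := by
      rw [Finset.sum_pair (by omega : L / 2 ≠ L)]
      simp [Nat.choose_self]
    calc L.choose (L / 2) + 1 = ∑ j ∈ ({L / 2, L} : Finset ℕ), L.choose j := hpair.symm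
      _ ≤ ∑ j ∈ Finset.Icc (L / 2) L, L.choose j := Finset.sum_le_sum_of_subset hsub
  have hx0 : (0 : ℝ) < (L : ℝ) := by positivity
  have hx4 : (4 : ℝ) ≤ (L : ℝ) := by exact_mod_cast hL
  have hCR0 : (0 : ℝ) < (L.choose (L / 2) : ℝ) := by exact_mod_cast hCpos
  have hSR0 : (0 : ℝ) < ((∑ j ∈ Finset.Icc (L / 2) L, L.choose j : ℕ) : ℝ) := by
    have : 0 < ∑ j ∈ Finset.Icc (L / 2) L, L.choose j := by omega
    exact_mod_cast this
  have hCltS : (L.choose (L / 2) : ℝ) < ((∑ j ∈ Finset.Icc (L / 2) L, L.choose j : ℕ) : ℝ) := by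
    exact_mod_cast (by omega : L.choose (L / 2) < ∑ j ∈ Finset.Icc (L / 2) L, L.choose j)
  have hlogb2 : Real.logb 2 2 = 1 := Real.logb_self_eq_one (by norm_num)
  -- Part 1
  have hp1 : 0 < fGrave L 0 := by
    have h0 : fGrave L 0 = (1 / (L : ℝ)) *
        (Real.logb 2 ((∑ j ∈ Finset.Icc (L / 2) L, L.choose j : ℕ) : ℝ)
          - Real.logb 2 (L.choose (L / 2) : ℝ)) := by
      rw [fGrave, show (0 : ℝ) * (L : ℝ) / 4 = 0 by ring, binent_zero]
      ring
    rw [h0]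
    have := Real.logb_lt_logb (b := 2) (by norm_num) hCR0 hCltS
    have h1L : (0 : ℝ) < 1 / (L : ℝ) := by positivity
    nlinarith
  -- Part 2: key quantities
  have hA : Real.logb 2 ((∑ j ∈ Finset.Icc (L / 2) L, L.choose j : ℕ) : ℝ) ≤ (L : ℝ) := by
    have hS2 : (∑ j ∈ Finset.Icc (L / 2) L, L.choose j) ≤ 2 ^ L := by
      calc (∑ j ∈ Finset.Icc (L / 2) L, L.choose j)
          ≤ ∑ j ∈ Finset.range (L + 1), L.choose j := by
            refine Finset.sum_le_sum_of_subset ?_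
            intro j hj
            simp only [Finset.mem_Icc] at hj
            simp only [Finset.mem_range]
            omega
        _ = 2 ^ L := Nat.sum_range_choose L
    have hS2R : ((∑ j ∈ Finset.Icc (L / 2) L, L.choose j : ℕ) : ℝ) ≤ (2 : ℝ) ^ L := by
      exact_mod_cast hS2
    calc Real.logb 2 ((∑ j ∈ Finset.Icc (L / 2) L, L.choose j : ℕ) : ℝ)
        ≤ Real.logb 2 ((2 : ℝ) ^ L) := Real.logb_le_logb_of_le (by norm_num) hSR0 hS2R
      _ = (L : ℝ) := by rw [Real.logb_pow, hlogb2, mul_one]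
  have hB : (L : ℝ) - 1 / 2 - Real.logb 2 (L : ℝ) / 2 ≤ Real.logb 2 (L.choose (L / 2) : ℝ) := by
    have hnat : 16 ^ r ≤ 4 * r * (L.choose (L / 2)) ^ 2 := by
      rw [hCB]; exact cb_sq r (by omega)
    have hcastn : (16 : ℝ) ^ r ≤ 4 * (r : ℝ) * ((L.choose (L / 2) : ℝ)) ^ 2 := by
      exact_mod_cast hnat
    have hxr : (L : ℝ) = 2 * (r : ℝ) := by rw [hrL]; push_cast; ring
    have h16 : ((2 : ℝ) ^ L) ^ 2 = (16 : ℝ) ^ r := by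
      rw [show (16 : ℝ) = 2 ^ (4 : ℕ) by norm_num, ← pow_mul, ← pow_mul]
      congr 1
      omega
    have hmain : ((2 : ℝ) ^ L) ^ 2 ≤ 2 * (L : ℝ) * ((L.choose (L / 2) : ℝ)) ^ 2 := by
      rw [h16, hxr]
      nlinarith [hcastn]
    have hlog := Real.logb_le_logb_of_le (b := 2) (by norm_num)
      (by positivity : (0 : ℝ) < ((2 : ℝ) ^ L) ^ 2) hmain
    rw [Real.logb_pow, Real.logb_pow, hlogb2, mul_one,
      Real.logb_mul (by positivity : (2 * (L : ℝ)) ≠ 0) (by positivity : ((L.choose (L / 2) : ℝ)) ^ 2 ≠ 0),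
      Real.logb_mul (by norm_num : (2 : ℝ) ≠ 0) (ne_of_gt hx0),
      Real.logb_pow, hlogb2] at hlog
    linarith
  have hb14 : binent (1 / 4 : ℝ) = 2 - (3 / 4) * Real.logb 2 3 := by
    have h4 : Real.logb 2 (4 : ℝ) = 2 := by
      rw [show (4 : ℝ) = 2 ^ (2 : ℕ) by norm_num, Real.logb_pow, hlogb2]
      norm_num
    have e1 : Real.logb 2 ((1 : ℝ) / 4) = -2 := by
      rw [one_div, Real.logb_inv, h4]
    have e2 : Real.logb 2 ((3 : ℝ) / 4) = Real.logb 2 3 - 2 := by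
      rw [Real.logb_div (by norm_num) (by norm_num), h4]
    rw [binent, show (1 : ℝ) - 1 / 4 = 3 / 4 by norm_num, e1, e2]
    ring
  have hlog3 : (4 : ℝ) / 3 < Real.logb 2 3 := by
    have h1627 : Real.logb 2 (16 : ℝ) < Real.logb 2 27 :=
      Real.logb_lt_logb (by norm_num) (by norm_num) (by norm_num)
    rw [show (16 : ℝ) = 2 ^ (4 : ℕ) by norm_num, show (27 : ℝ) = 3 ^ (3 : ℕ) by norm_num,
      Real.logb_pow, Real.logb_pow, hlogb2] at h1627
    push_cast at h1627
    linarith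
  have hx1 : (0 : ℝ) < (L : ℝ) - 1 := by linarith
  have hbx : (L : ℝ) * binent (1 / (L : ℝ)) = Real.logb 2 (L : ℝ)
      + ((L : ℝ) - 1) * (Real.logb 2 (L : ℝ) - Real.logb 2 ((L : ℝ) - 1)) := by
    have e1 : Real.logb 2 (1 / (L : ℝ)) = -Real.logb 2 (L : ℝ) := by
      rw [one_div, Real.logb_inv]
    have e2 : (1 : ℝ) - 1 / (L : ℝ) = ((L : ℝ) - 1) / (L : ℝ) := by
      field_simp
    have e3 : Real.logb 2 (((L : ℝ) - 1) / (L : ℝ))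
        = Real.logb 2 ((L : ℝ) - 1) - Real.logb 2 (L : ℝ) :=
      Real.logb_div (by linarith) (by linarith)
    rw [binent, e1, e2, e3]
    field_simp
    ring
  have hkey : 1 ≤ ((L : ℝ) - 1) * (Real.logb 2 (L : ℝ) - Real.logb 2 ((L : ℝ) - 1)) := by
    have hcast : ((L - 1 : ℕ) : ℝ) = (L : ℝ) - 1 := by
      rw [Nat.cast_sub (by omega)]
      norm_num
    have hdiv : (L : ℝ) / ((L : ℝ) - 1) = 1 + 1 / ((L : ℝ) - 1) := by
      field_simp
      ring
    have hbern := one_add_mul_le_pow (a := 1 / ((L : ℝ) - 1))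
      (le_trans (by norm_num : (-2 : ℝ) ≤ 0) (by positivity)) (L - 1)
    have h2le : (2 : ℝ) ≤ ((L : ℝ) / ((L : ℝ) - 1)) ^ (L - 1) := by
      rw [hdiv]
      calc (2 : ℝ) = 1 + ((L : ℝ) - 1) * (1 / ((L : ℝ) - 1)) := by rw [mul_one_div, div_self (ne_of_gt hx1)]; norm_num
        _ = 1 + ((L - 1 : ℕ) : ℝ) * (1 / ((L : ℝ) - 1)) := by rw [hcast]
        _ ≤ _ := hbern
    have hlogle := Real.logb_le_logb_of_le (b := 2) (by norm_num) (by norm_num) h2le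
    rw [hlogb2, Real.logb_pow,
      Real.logb_div (ne_of_gt hx0) (ne_of_gt hx1), hcast] at hlogle
    linarith [hlogle]
  have hx2 : Real.logb 2 ((L : ℝ) / 2) = Real.logb 2 (L : ℝ) - 1 := by
    rw [Real.logb_div (ne_of_gt hx0) (by norm_num), hlogb2]
  have hE : (L : ℝ) * fGrave L (1 / (L : ℝ))
      = Real.logb 2 ((∑ j ∈ Finset.Icc (L / 2) L, L.choose j : ℕ) : ℝ)
        - (L : ℝ) * binent (1 / (L : ℝ))
        - Real.logb 2 (L.choose (L / 2) : ℝ)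
        + (1 / 2) * Real.logb 2 ((L : ℝ) / 2) + binent (1 / 4 : ℝ) := by
    rw [fGrave, show (1 / (L : ℝ)) * (L : ℝ) / 4 = 1 / 4 by field_simp]
    field_simp
  have hEneg : (L : ℝ) * fGrave L (1 / (L : ℝ)) < 0 := by
    rw [hE, hbx, hb14, hx2]
    linarith [hA, hB, hkey, hlog3]
  have hp2 : fGrave L (1 / (L : ℝ)) < 0 := by
    have heq : fGrave L (1 / (L : ℝ)) = ((L : ℝ) * fGrave L (1 / (L : ℝ))) / (L : ℝ) := by
      field_simp
    rw [heq]
    exact div_neg_of_neg_of_pos hEneg hx0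
  -- Part 3
  have hcf : Continuous (fGrave L) := by
    have hb := continuous_binent
    unfold fGrave
    exact
      ((((continuous_const.sub hb).sub continuous_const).add
        ((continuous_id.div_const 2).mul continuous_const)).add
        (continuous_const.mul (hb.comp ((continuous_id.mul continuous_const).div_const 4))))
  obtain ⟨y0, hy0mem, hy0root⟩ :
      ∃ y ∈ Set.Ioo (0 : ℝ) (1 / (L : ℝ)), fGrave L y = 0 := by
    have h := intermediate_value_Ioo' (a := (0 : ℝ)) (b := 1 / (L : ℝ))
      (by positivity) hcf.continuousOn
    obtain ⟨y, hy, hfy⟩ := h ⟨hp2, hp1⟩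
    exact ⟨y, hy, hfy⟩
  set K : Set ℝ := Set.Icc (0 : ℝ) (1 / (L : ℝ)) ∩ (fGrave L) ⁻¹' {0} with hKdef
  have hKc : IsClosed K := isClosed_Icc.inter (isClosed_singleton.preimage hcf)
  have hy0K : y0 ∈ K := ⟨⟨hy0mem.1.le, hy0mem.2.le⟩, hy0root⟩
  have hKne : K.Nonempty := ⟨y0, hy0K⟩
  have hKbd : BddBelow K := ⟨0, fun z hz => hz.1.1⟩
  have hδgK : sInf K ∈ K := hKc.csInf_mem hKne hKbd
  have hroot : fGrave L (sInf K) = 0 := hδgK.2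
  have hδg0 : 0 < sInf K := by
    rcases hδgK.1.1.lt_or_eq with h | h
    · exact h
    · exfalso
      rw [← h] at hroot
      linarith
  have hδglt : sInf K < 1 / (L : ℝ) := lt_of_le_of_lt (csInf_le hKbd hy0K) hy0mem.2
  refine ⟨hp1, hp2, sInf K, ⟨hδg0, hδglt⟩, hroot, ?_⟩
  intro δ hδ0 hδlt
  by_contra hcon
  push_neg at hcon
  rcases hcon.lt_or_eq with hlt | heq
  · obtain ⟨y, hy, hfy⟩ := intermediate_value_Ioo' (a := (0 : ℝ)) (b := δ) hδ0
      hcf.continuousOn ⟨hlt, hp1⟩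
    have hyK : y ∈ K :=
      ⟨⟨hy.1.le, (hy.2.trans (hδlt.trans hδglt)).le⟩, hfy⟩
    have := csInf_le hKbd hyK
    linarith [hy.2]
  · have hδK : δ ∈ K := ⟨⟨hδ0, (hδlt.trans hδglt).le⟩, heq⟩
    have := csInf_le hKbd hδK
    linarith
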